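/- The sequence b_j = 2cot(π/(2j+6)) − 2cot(π/(2j+2)), j ≥ 0, is strictly decreasing. -/

import Mathlib

open Real

lemma cot_hasDerivAt {x : ℝ} (h : Real.sin x ≠ 0) :
    HasDerivAt Real.cot (-(1 / Real.sin x ^ 2)) x := by
  have h1 := (Real.hasDerivAt_cos x).div (Real.hasDerivAt_sin x) h
  have hfun : Real.cot = fun y => Real.cos y / Real.sin y :=
    funext fun y => Real.cot_eq_cos_div_sin y
  rw [hfun]
  refine h1.congr_deriv ?_
  have hsc := Real.sin_sq_add_cos_sq x
  field_simp
  nlinarith [hsc]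

lemma hasDerivAt_aux (c : ℝ) {x : ℝ} (hs : 0 < 2 * x + c)
    (hu : Real.sin (π / (2 * x + c)) ≠ 0) :
    HasDerivAt (fun y : ℝ => Real.cot (π / (2 * y + c)))
      (2 * π / ((2 * x + c) ^ 2 * Real.sin (π / (2 * x + c)) ^ 2)) x := by
  have h1 : HasDerivAt (fun y : ℝ => 2 * y + c) 2 x := by
    simpa using ((hasDerivAt_id x).const_mul 2).add_const c
  have h2 : HasDerivAt (fun y : ℝ => π / (2 * y + c)) (-(2 * π) / (2 * x + c) ^ 2) x := by
    have := (hasDerivAt_const x π).div h1 hs.ne'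
    refine this.congr_deriv ?_
    ring
  have h3 := (cot_hasDerivAt hu).comp x h2
  refine h3.congr_deriv ?_
  have hne : (2 * x + c) ≠ 0 := hs.ne'
  field_simp

lemma sinc_strictAnti {a b : ℝ} (ha : 0 < a) (hab : a < b) (hb : b ≤ π) :
    Real.sin b / b < Real.sin a / a := by
  have hb0 : 0 < b := ha.trans hab
  have hw2 : 0 < a / b := div_pos ha hb0
  have hw1 : 0 < 1 - a / b := by
    have : a / b < 1 := (div_lt_one hb0).2 hab
    linarith
  have key := strictConcaveOn_sin_Icc.2 (x := 0) (y := b)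
    (Set.mem_Icc.2 ⟨le_rfl, Real.pi_pos.le⟩) (Set.mem_Icc.2 ⟨hb0.le, hb⟩)
    hb0.ne hw1 hw2 (by ring)
  have hab' : (1 - a / b) • (0 : ℝ) + (a / b) • b = a := by
    simp only [smul_eq_mul]
    field_simp
    ring
  rw [hab'] at key
  simp only [Real.sin_zero, smul_eq_mul, mul_zero, zero_add] at key
  rw [div_lt_div_iff₀ hb0 ha]
  have heq : Real.sin b * a = a / b * Real.sin b * b := by
    field_simp
  rw [heq]
  exact mul_lt_mul_of_pos_right key hb0

theorem b_strictAnti :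
    StrictAnti
      (fun j : ℕ => 2 * Real.cot (π / (2 * j + 6)) - 2 * Real.cot (π / (2 * j + 2))) := by
  set F : ℝ → ℝ := fun x => 2 * Real.cot (π / (2 * x + 6)) - 2 * Real.cot (π / (2 * x + 2))
    with hF
  have key : ∀ x : ℝ, 0 ≤ x →
      HasDerivAt F
        (2 * (2 * π / ((2 * x + 6) ^ 2 * Real.sin (π / (2 * x + 6)) ^ 2)) -
         2 * (2 * π / ((2 * x + 2) ^ 2 * Real.sin (π / (2 * x + 2)) ^ 2))) x := by
    intro x hx
    have h2 : (0:ℝ) < 2 * x + 2 := by linarith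
    have h6 : (0:ℝ) < 2 * x + 6 := by linarith
    have hu2 : Real.sin (π / (2 * x + 2)) ≠ 0 := by
      refine (Real.sin_pos_of_pos_of_lt_pi (by positivity) ?_).ne'
      calc π / (2 * x + 2) ≤ π / 2 := by gcongr <;> linarith [Real.pi_pos]
        _ < π := by linarith [Real.pi_pos]
    have hu6 : Real.sin (π / (2 * x + 6)) ≠ 0 := by
      refine (Real.sin_pos_of_pos_of_lt_pi (by positivity) ?_).ne'
      calc π / (2 * x + 6) ≤ π / 2 := by gcongr <;> linarith [Real.pi_pos]
        _ < π := by linarith [Real.pi_pos]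
    exact ((hasDerivAt_aux 6 h6 hu6).const_mul 2).sub
      ((hasDerivAt_aux 2 h2 hu2).const_mul 2)
  have hSA : StrictAntiOn F (Set.Ici 0) := by
    apply strictAntiOn_of_deriv_neg (convex_Ici 0)
    · exact fun x hx => ((key x hx).continuousAt).continuousWithinAt
    · intro x hx
      rw [interior_Ici] at hx
      have hx0 : (0:ℝ) ≤ x := le_of_lt hx
      rw [(key x hx0).deriv]
      have h2 : (0:ℝ) < 2 * x + 2 := by linarith
      have h6 : (0:ℝ) < 2 * x + 6 := by linarith
      have hu2pos : 0 < Real.sin (π / (2 * x + 2)) := by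
        refine Real.sin_pos_of_pos_of_lt_pi (by positivity) ?_
        calc π / (2 * x + 2) ≤ π / 2 := by gcongr <;> linarith [Real.pi_pos]
          _ < π := by linarith [Real.pi_pos]
      have hu6pos : 0 < Real.sin (π / (2 * x + 6)) := by
        refine Real.sin_pos_of_pos_of_lt_pi (by positivity) ?_
        calc π / (2 * x + 6) ≤ π / 2 := by gcongr <;> linarith [Real.pi_pos]
          _ < π := by linarith [Real.pi_pos]
      -- sinc inequality: sin u₂ / u₂ < sin u₆ / u₆ with u₆ < u₂
      have hlt : π / (2 * x + 6) < π / (2 * x + 2) := by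
        gcongr <;> linarith [Real.pi_pos]
      have hle : π / (2 * x + 2) ≤ π := by
        calc π / (2 * x + 2) ≤ π / 2 := by gcongr <;> linarith [Real.pi_pos]
          _ ≤ π := by linarith [Real.pi_pos]
      have hsinc := sinc_strictAnti (by positivity : 0 < π / (2 * x + 6)) hlt hle
      -- turn it into (2x+2) * sin u₂ < (2x+6) * sin u₆
      have hkey : (2 * x + 2) * Real.sin (π / (2 * x + 2)) <
          (2 * x + 6) * Real.sin (π / (2 * x + 6)) := by
        have h2' : (2 * x + 2) ≠ 0 := h2.ne'
        have h6' : (2 * x + 6) ≠ 0 := h6.ne'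
        have hπ : (0:ℝ) < π := Real.pi_pos
        rw [div_lt_div_iff₀ (by positivity) (by positivity)] at hsinc
        -- hsinc : sin u₂ * (π / (2x+6)) < sin u₆ * (π / (2x+2))
        rw [mul_div_assoc', mul_div_assoc', div_lt_div_iff₀ h6 h2] at hsinc
        -- hsinc : sin u₂ * π * (2x+2) < sin u₆ * π * (2x+6)
        have h' : (2 * x + 2) * Real.sin (π / (2 * x + 2)) * π <
            (2 * x + 6) * Real.sin (π / (2 * x + 6)) * π := by linear_combination hsinc
        exact lt_of_mul_lt_mul_right h' hπ.le
      have hsq : (2 * x + 2) ^ 2 * Real.sin (π / (2 * x + 2)) ^ 2 <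
          (2 * x + 6) ^ 2 * Real.sin (π / (2 * x + 6)) ^ 2 := by
        nlinarith [hkey, mul_pos h2 hu2pos, mul_pos h6 hu6pos]
      have hdiv : 2 * π / ((2 * x + 6) ^ 2 * Real.sin (π / (2 * x + 6)) ^ 2) <
          2 * π / ((2 * x + 2) ^ 2 * Real.sin (π / (2 * x + 2)) ^ 2) := by
        apply div_lt_div_of_pos_left (by positivity) (by positivity) hsq
      linarith
  intro m n hmn
  exact hSA (Set.mem_Ici.2 (Nat.cast_nonneg m)) (Set.mem_Ici.2 (Nat.cast_nonneg n))
    (by exact_mod_cast hmn)
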